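/- Let n ≥ 1, J ≥ 1, γ_1, …, γ_J > 0, and let p^1, …, p^J ∈ ℝ^n be probability vectors with p^j_y > 0 for all j, y. Set Γ = (Σ_{j=1}^J 1/γ_j)^{−1}, A = ( Σ_y Π_{i=1}^J (p^i_y)^{Γ/γ_i} )^{−1}, and P_y = A · Π_{i=1}^J (p^i_y)^{Γ/γ_i}. Then P is a probability vector with P_y > 0 for all y, and for every probability vector λ ∈ ℝ^n: Σ_{j=1}^J (1/γ_j) H(λ∥p^j) = (1/Γ) H(λ∥P) + (1/Γ) log A. -/

import Mathlib

open scoped BigOperators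

/-- aggregation of dual entropic valuations.  With `Γ = (Σ_j 1/γ_j)⁻¹`,
`A = (Σ_y Π_i (p^i_y)^{Γ/γ_i})⁻¹` and `P_y = A Π_i (p^i_y)^{Γ/γ_i}`, the vector `P` is a
probability vector with positive entries and, for every probability vector `λ`,
`Σ_j (1/γ_j) H(λ∥p^j) = (1/Γ) H(λ∥P) + (1/Γ) log A`. -/
theorem stmt_16 (n J : ℕ) (hn : 1 ≤ n) (hJ : 1 ≤ J)
    (γ : Fin J → ℝ) (hγ : ∀ j, 0 < γ j)
    (p : Fin J → (Fin n → ℝ)) (hp : ∀ j y, 0 < p j y) (hpsum : ∀ j, ∑ y, p j y = 1)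
    (Γ : ℝ) (hΓ : Γ = (∑ j, 1 / γ j)⁻¹)
    (A : ℝ) (hA : A = (∑ y, ∏ i, (p i y) ^ (Γ / γ i))⁻¹)
    (P : Fin n → ℝ) (hP : ∀ y, P y = A * ∏ i, (p i y) ^ (Γ / γ i)) :
    ((∀ y, 0 < P y) ∧ ∑ y, P y = 1) ∧
      ∀ l : Fin n → ℝ, (∀ y, 0 ≤ l y) → (∑ y, l y = 1) →
        ∑ j, (1 / γ j) * (∑ y, l y * Real.log (l y / p j y))
          = (1 / Γ) * (∑ y, l y * Real.log (l y / P y)) + (1 / Γ) * Real.log A := by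
  have : Nonempty (Fin J) := Fin.pos_iff_nonempty.mp hJ
  have : Nonempty (Fin n) := Fin.pos_iff_nonempty.mp hn
  have hJne : (Finset.univ : Finset (Fin J)).Nonempty := Finset.univ_nonempty
  have hnne : (Finset.univ : Finset (Fin n)).Nonempty := Finset.univ_nonempty
  have hSpos : 0 < ∑ j, 1 / γ j :=
    Finset.sum_pos (fun j _ => one_div_pos.mpr (hγ j)) hJne
  have hΓpos : 0 < Γ := by rw [hΓ]; exact inv_pos.mpr hSpos
  have hprodpos : ∀ y, 0 < ∏ i, (p i y) ^ (Γ / γ i) := fun y =>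
    Finset.prod_pos (fun i _ => Real.rpow_pos_of_pos (hp i y) _)
  have hTpos : 0 < ∑ y, ∏ i, (p i y) ^ (Γ / γ i) :=
    Finset.sum_pos (fun y _ => hprodpos y) hnne
  have hApos : 0 < A := by rw [hA]; exact inv_pos.mpr hTpos
  have hPpos : ∀ y, 0 < P y := fun y => by rw [hP]; exact mul_pos hApos (hprodpos y)
  have hPsum : ∑ y, P y = 1 := by
    simp only [hP, ← Finset.mul_sum]
    rw [hA, inv_mul_cancel₀ hTpos.ne']
  refine ⟨⟨hPpos, hPsum⟩, ?_⟩
  intro l hl hlsum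
  have hΓinv : 1 / Γ = ∑ j, 1 / γ j := by rw [hΓ, one_div, inv_inv]
  have hSΓ : (∑ j, 1 / γ j) * Γ = 1 := by
    rw [hΓ]; exact mul_inv_cancel₀ hSpos.ne'
  have hlogP : ∀ y, Real.log (P y) = Real.log A + ∑ i, (Γ / γ i) * Real.log (p i y) := by
    intro y
    rw [hP, Real.log_mul hApos.ne' (hprodpos y).ne',
      Real.log_prod (fun i (_ : i ∈ Finset.univ) => (Real.rpow_pos_of_pos (hp i y) (Γ / γ i)).ne')]
    simp_rw [Real.log_rpow (hp _ y)]
  have key : ∀ y, ∑ j, (1 / γ j) * (l y * Real.log (l y / p j y))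
      = (1 / Γ) * (l y * Real.log (l y / P y)) + (1 / Γ) * (l y * Real.log A) := by
    intro y
    rcases eq_or_lt_of_le (hl y) with h0 | hpos
    · simp [← h0]
    · have hld : ∀ (q : ℝ), 0 < q → Real.log (l y / q) = Real.log (l y) - Real.log q :=
        fun q hq => Real.log_div hpos.ne' hq.ne'
      rw [hld _ (hPpos y), hlogP y, hΓinv]
      have hLHS : ∑ j, (1 / γ j) * (l y * Real.log (l y / p j y))
          = (∑ j, 1 / γ j) * (l y * Real.log (l y))
            - l y * ∑ j, (1 / γ j) * Real.log (p j y) := by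
        simp_rw [hld _ (hp _ y)]
        rw [Finset.sum_mul, Finset.mul_sum, ← Finset.sum_sub_distrib]
        exact Finset.sum_congr rfl (fun j _ => by ring)
      rw [hLHS]
      have hR : (∑ j, 1 / γ j) * ∑ i, (Γ / γ i) * Real.log (p i y)
          = ∑ i, (1 / γ i) * Real.log (p i y) := by
        rw [Finset.mul_sum]
        refine Finset.sum_congr rfl (fun i _ => ?_)
        have : (∑ j, 1 / γ j) * (Γ / γ i) = 1 / γ i := by
          rw [← mul_div_assoc, hSΓ]
        rw [← mul_assoc, this]
      have expand : (∑ j, 1 / γ j) * (l y * (Real.log (l y)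
            - (Real.log A + ∑ i, (Γ / γ i) * Real.log (p i y))))
            + (∑ j, 1 / γ j) * (l y * Real.log A)
          = (∑ j, 1 / γ j) * (l y * Real.log (l y))
            - l y * ((∑ j, 1 / γ j) * ∑ i, (Γ / γ i) * Real.log (p i y)) := by ring
      rw [expand, hR]
  calc ∑ j, (1 / γ j) * (∑ y, l y * Real.log (l y / p j y))
      = ∑ y, ∑ j, (1 / γ j) * (l y * Real.log (l y / p j y)) := by
        simp_rw [Finset.mul_sum]; exact Finset.sum_comm
    _ = ∑ y, ((1 / Γ) * (l y * Real.log (l y / P y)) + (1 / Γ) * (l y * Real.log A)) :=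
        Finset.sum_congr rfl (fun y _ => key y)
    _ = (1 / Γ) * (∑ y, l y * Real.log (l y / P y)) + (1 / Γ) * Real.log A := by
        rw [Finset.sum_add_distrib, ← Finset.mul_sum, ← Finset.mul_sum]
        congr 1
        rw [← Finset.sum_mul, hlsum, one_mul]
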